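/- For every finite-dimensional Ŷ_{r,n}^K-module M one has the direct sum decomposition M = ⊕_{μ∈C_r(n)} M_μ of Ŷ_{r,n}^K-modules, where M_μ = Σ_{w∈S_n} g_w(I_μM). -/

import Mathlib

/- Common setup: the affine Yokonuma-Hecke algebra presented by generators and
relations, reduced words, Bruhat order, affine Hecke algebras (of tensor-product
type), isotypic components and induced modules. -/

set_option maxHeartbeats 1000000

open scoped TensorProduct

noncomputable section

namespace YH

/-- Generators of the affine Yokonuma-Hecke algebra: `t j` for `j : Fin n`,
`g i` (for `i` with `i+1 < n`, representing the transposition `(i, i+1)` in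
0-based indexing), and `X1`, `X1inv` (the generator `X_1` and its inverse). -/
inductive YGen (n : ℕ) : Type
  | t (j : Fin n) : YGen n
  | g (i : ℕ) (h : i + 1 < n) : YGen n
  | X1 : YGen n
  | X1inv : YGen n

variable (K : Type) [Field K] (r n : ℕ) (q : K)

/-- The free algebra on the generators. -/
abbrev FY := FreeAlgebra K (YGen n)

def tF (j : Fin n) : FY K n := FreeAlgebra.ι K (YGen.t j)
def gF (i : ℕ) (h : i + 1 < n) : FY K n := FreeAlgebra.ι K (YGen.g i h)
def X1F : FY K n := FreeAlgebra.ι K YGen.X1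
def X1invF : FY K n := FreeAlgebra.ι K YGen.X1inv

/-- The idempotent `e_i = (1/r) ∑_{s=0}^{r-1} t_i^s t_{i+1}^{-s}` (as an element
of the free algebra, with `t_{i+1}^{-s}` written as `t_{i+1}^{(r-s) % r}`,
using `t^r = 1`). -/
def eF (i : ℕ) (h : i + 1 < n) : FY K n :=
  (r : K)⁻¹ • ∑ s ∈ Finset.range r,
    tF K n ⟨i, by omega⟩ ^ s * tF K n ⟨i + 1, h⟩ ^ ((r - s) % r)

/-- The simple transposition `s_i = (i, i+1)` of `Fin n` (0-based). -/
def swapi (i : ℕ) (h : i + 1 < n) : Equiv.Perm (Fin n) :=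
  Equiv.swap ⟨i, by omega⟩ ⟨i + 1, h⟩

/-- Defining relations of the affine Yokonuma-Hecke algebra `Ŷ_{r,n}(q)` over `K`. -/
inductive YRel : FY K n → FY K n → Prop
  | gg {i j : ℕ} (hi : i + 1 < n) (hj : j + 1 < n) (hij : i + 2 ≤ j ∨ j + 2 ≤ i) :
      YRel (gF K n i hi * gF K n j hj) (gF K n j hj * gF K n i hi)
  | braid {i : ℕ} (h : i + 2 < n) :
      YRel (gF K n i (by omega) * gF K n (i + 1) h * gF K n i (by omega))
        (gF K n (i + 1) h * gF K n i (by omega) * gF K n (i + 1) h)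
  | tt (i j : Fin n) : YRel (tF K n i * tF K n j) (tF K n j * tF K n i)
  | gt {i : ℕ} (hi : i + 1 < n) (j : Fin n) :
      YRel (gF K n i hi * tF K n j) (tF K n (swapi n i hi j) * gF K n i hi)
  | tr (j : Fin n) : YRel (tF K n j ^ r) 1
  | gsq {i : ℕ} (hi : i + 1 < n) :
      YRel (gF K n i hi * gF K n i hi)
        (1 + (q - q⁻¹) • (eF K r n i hi * gF K n i hi))
  | XXinv : YRel (X1F K n * X1invF K n) 1
  | XinvX : YRel (X1invF K n * X1F K n) 1
  | gXgX (h : 1 < n) :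
      YRel (gF K n 0 (by omega) * X1F K n * gF K n 0 (by omega) * X1F K n)
        (X1F K n * gF K n 0 (by omega) * X1F K n * gF K n 0 (by omega))
  | gX {i : ℕ} (hi : i + 1 < n) (h1 : 1 ≤ i) :
      YRel (gF K n i hi * X1F K n) (X1F K n * gF K n i hi)
  | tX (j : Fin n) : YRel (tF K n j * X1F K n) (X1F K n * tF K n j)

/-- The affine Yokonuma-Hecke algebra `Ŷ_{r,n}^K`. -/
abbrev Y := RingQuot (YRel K r n q)

def mkY : FY K n →ₐ[K] Y K r n q := RingQuot.mkAlgHom K (YRel K r n q)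

/-- The generator `t_j` (0-based `j`). -/
def t (j : Fin n) : Y K r n q := mkY K r n q (tF K n j)
/-- The generator `g_i` (0-based `i`, `i+1 < n`). -/
def g (i : ℕ) (h : i + 1 < n) : Y K r n q := mkY K r n q (gF K n i h)
/-- The idempotent `e_i`. -/
def e (i : ℕ) (h : i + 1 < n) : Y K r n q := mkY K r n q (eF K r n i h)
def X1 : Y K r n q := mkY K r n q (X1F K n)
def X1inv : Y K r n q := mkY K r n q (X1invF K n)

/-- `X_{i+1} := g_i X_i g_i`, recursively. -/
def Xrec : (k : ℕ) → k < n → Y K r n q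
  | 0, _ => X1 K r n q
  | k + 1, h => g K r n q k (by omega) * Xrec k (by omega) * g K r n q k (by omega)

/-- The commuting elements `X_j` (0-based `j`). -/
def X (j : Fin n) : Y K r n q := Xrec K r n q j.1 j.2

/-! ### Words and reduced expressions -/

/-- A word in the simple transpositions. -/
abbrev Word := List {i : ℕ // i + 1 < n}

/-- The permutation represented by a word. -/
def permOfWord (l : Word n) : Equiv.Perm (Fin n) :=
  (l.map fun i => swapi n i.1 i.2).prod

/-- `l` is a reduced word for `w`. -/
def IsReducedWord (l : Word n) (w : Equiv.Perm (Fin n)) : Prop :=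
  permOfWord n l = w ∧ ∀ l' : Word n, permOfWord n l' = w → l.length ≤ l'.length

/-- The product `g_{i_1} ⋯ g_{i_k}` along a word. -/
def gword (l : Word n) : Y K r n q := (l.map fun i => g K r n q i.1 i.2).prod

/-- `gw` is the family `w ↦ g_w`, i.e. `g_w` is the product of the `g_i` along
any reduced expression of `w` (well defined by Matsumoto's lemma). -/
def GwSpec (gw : Equiv.Perm (Fin n) → Y K r n q) : Prop :=
  ∀ (w : Equiv.Perm (Fin n)) (l : Word n), IsReducedWord n l w → gw w = gword K r n q l

/-- Bruhat order: `u ≤ w` iff some reduced word of `w` has a subword which is a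
reduced word of `u`. -/
def BruhatLE (u w : Equiv.Perm (Fin n)) : Prop :=
  ∃ l : Word n, IsReducedWord n l w ∧ ∃ l' : Word n, l'.Sublist l ∧ IsReducedWord n l' u

def BruhatLT (u w : Equiv.Perm (Fin n)) : Prop := BruhatLE n u w ∧ u ≠ w

/-! ### Monomials and distinguished subalgebras -/

/-- `XU` is a family of units lifting the commuting elements `X_j` (each `X_j`
is invertible in `Ŷ_{r,n}^K`). -/
def XUSpec (XU : Fin n → (Y K r n q)ˣ) : Prop :=
  ∀ j, (XU j : Y K r n q) = X K r n q j

/-- The monomial `X^α = X_1^{α_1} ⋯ X_n^{α_n}`, `α ∈ ℤ^n`. -/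
def Xpow (XU : Fin n → (Y K r n q)ˣ) (α : Fin n → ℤ) : Y K r n q :=
  ((List.finRange n).map fun j => ((XU j ^ α j : (Y K r n q)ˣ) : Y K r n q)).prod

/-- The monomial `t^β = t_1^{β_1} ⋯ t_n^{β_n}`, `β ∈ (ℤ/rℤ)^n`. -/
def tpow (β : Fin n → ZMod r) : Y K r n q :=
  ((List.finRange n).map fun j => t K r n q j ^ (β j).val).prod

/-- The subalgebra `KT` generated by `t_1, …, t_n` (the group algebra of
`T = (ℤ/rℤ)^n`). -/
def KT : Subalgebra K (Y K r n q) := Algebra.adjoin K (Set.range (t K r n q))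

/-- The Laurent polynomial subalgebra `P_n^K` generated by `X_1^{±1}, …, X_n^{±1}`. -/
def Pn (XU : Fin n → (Y K r n q)ˣ) : Subalgebra K (Y K r n q) :=
  Algebra.adjoin K
    ((Set.range fun j => ((XU j : (Y K r n q)ˣ) : Y K r n q)) ∪
      (Set.range fun j => (((XU j)⁻¹ : (Y K r n q)ˣ) : Y K r n q)))

/-- The subalgebra `P_n^K(T)` generated by `t_1, …, t_n` and `X_1^{±1}, …, X_n^{±1}`. -/
def PT (XU : Fin n → (Y K r n q)ˣ) : Subalgebra K (Y K r n q) :=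
  Algebra.adjoin K
    (Set.range (t K r n q) ∪
      (Set.range fun j => ((XU j : (Y K r n q)ˣ) : Y K r n q)) ∪
      (Set.range fun j => (((XU j)⁻¹ : (Y K r n q)ˣ) : Y K r n q)))

/-- The subalgebra of `Ŷ_{r,n}^K` generated by all `t_j`, all `X_j^{±1}`, and the
`g_w` for `w` in a set `W` of permutations (e.g. a Young subgroup). -/
def Ysub (XU : Fin n → (Y K r n q)ˣ) (gw : Equiv.Perm (Fin n) → Y K r n q)
    (W : Set (Equiv.Perm (Fin n))) : Subalgebra K (Y K r n q) :=
  Algebra.adjoin K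
    (Set.range (t K r n q) ∪
      (Set.range fun j => ((XU j : (Y K r n q)ˣ) : Y K r n q)) ∪
      (Set.range fun j => (((XU j)⁻¹ : (Y K r n q)ˣ) : Y K r n q)) ∪
      (gw '' W))

/-- The Young subgroup `S_μ` attached to a block function `c : Fin n → Fin r`
(for monotone `c`, this is the Young subgroup of the composition `μ` whose
parts are the fiber sizes of `c`): permutations preserving the blocks. -/
def Smu (c : Fin n → Fin r) : Set (Equiv.Perm (Fin n)) :=
  {w : Equiv.Perm (Fin n) | ∀ j, c (w j) = c j}

/-- Permutations fixing all positions `≥ m` (the subgroup `S_m ⊆ S_n`). -/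
def SFix (m : ℕ) : Set (Equiv.Perm (Fin n)) :=
  {w : Equiv.Perm (Fin n) | ∀ j : Fin n, m ≤ j.1 → w j = j}

/-! ### Isotypic components -/

section Modules

variable (M : Type) [AddCommGroup M] [Module K M] [Module (Y K r n q) M]
  [IsScalarTower K (Y K r n q) M]

/-- The `V(μ)`-isotypic component of `M` as a `KT`-module: since `V(μ)` is the
one-dimensional `KT`-module on which `t_j` acts by the scalar `ζ^{c j}`, this is
the simultaneous eigenspace. Here `ζ` is a primitive `r`-th root of unity and
the simple `K(ℤ/rℤ)`-modules are `V_k : t ↦ ζ^{k}`, `k : Fin r`. -/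
def Imu (ζ : K) (c : Fin n → Fin r) : Submodule K M where
  carrier := {m : M | ∀ j : Fin n, t K r n q j • m = ζ ^ ((c j : ℕ)) • m}
  add_mem' := by
    intro a b ha hb
    intro j
    rw [smul_add, ha j, hb j, smul_add]
  zero_mem' := by intro j; simp
  smul_mem' := by
    intro k m hm
    intro j
    rw [smul_comm, hm j, smul_comm]

/-- `M_μ := ∑_{w ∈ S_n} g_w (I_μ M)`. -/
def Mmu (ζ : K) (c : Fin n → Fin r) (gw : Equiv.Perm (Fin n) → Y K r n q) :
    Submodule K M :=
  Submodule.span K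
    {x : M | ∃ w : Equiv.Perm (Fin n), ∃ m ∈ Imu K r n q M ζ c, x = gw w • m}

end Modules

/-! ### Affine Hecke algebras of type A (tensor-product form)

`HH K q n r c` is the tensor product `Ĥ_{μ_1}^K ⊗ ⋯ ⊗ Ĥ_{μ_r}^K` of affine Hecke
algebras, presented globally: generators `T_i` for those adjacencies `i, i+1`
lying in a common block of `c : Fin n → Fin r`, and invertible `Y_j` for all
`j`.  (For `r = 1` and `c` constant this is the affine Hecke algebra `Ĥ_n^K`.) -/

inductive HGen (n r : ℕ) (c : Fin n → Fin r) : Type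
  | T (i : ℕ) (h : i + 1 < n) (hc : c ⟨i, by omega⟩ = c ⟨i + 1, h⟩) : HGen n r c
  | Y (j : Fin n) : HGen n r c
  | Yinv (j : Fin n) : HGen n r c

end YH

namespace YH

variable (K : Type) [Field K] (q : K) {n r : ℕ}

abbrev FH (c : Fin n → Fin r) := FreeAlgebra K (HGen n r c)

def TFh (c : Fin n → Fin r) (i : ℕ) (h : i + 1 < n)
    (hc : c ⟨i, by omega⟩ = c ⟨i + 1, h⟩) : FH K c :=
  FreeAlgebra.ι K (HGen.T i h hc)
def YFh (c : Fin n → Fin r) (j : Fin n) : FH K c := FreeAlgebra.ι K (HGen.Y j)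
def YinvFh (c : Fin n → Fin r) (j : Fin n) : FH K c := FreeAlgebra.ι K (HGen.Yinv j)

/-- Defining relations of the (tensor product of) affine Hecke algebra(s). -/
inductive HRel (c : Fin n → Fin r) : FH K c → FH K c → Prop
  | quad {i : ℕ} (h : i + 1 < n) (hc : c ⟨i, by omega⟩ = c ⟨i + 1, h⟩) :
      HRel c ((TFh K c i h hc - algebraMap K (FH K c) q) *
          (TFh K c i h hc + algebraMap K (FH K c) q⁻¹)) 0
  | braid {i : ℕ} (h : i + 2 < n)
      (hc1 : c ⟨i, by omega⟩ = c ⟨i + 1, by omega⟩)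
      (hc2 : c ⟨i + 1, by omega⟩ = c ⟨i + 2, h⟩) :
      HRel c
        (TFh K c i (by omega) hc1 * TFh K c (i + 1) (by omega) hc2 *
          TFh K c i (by omega) hc1)
        (TFh K c (i + 1) (by omega) hc2 * TFh K c i (by omega) hc1 *
          TFh K c (i + 1) (by omega) hc2)
  | TT {i j : ℕ} (hi : i + 1 < n) (hci : c ⟨i, by omega⟩ = c ⟨i + 1, hi⟩)
      (hj : j + 1 < n) (hcj : c ⟨j, by omega⟩ = c ⟨j + 1, hj⟩)
      (hij : i + 2 ≤ j ∨ j + 2 ≤ i) :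
      HRel c (TFh K c i hi hci * TFh K c j hj hcj)
        (TFh K c j hj hcj * TFh K c i hi hci)
  | YY (j k : Fin n) : HRel c (YFh K c j * YFh K c k) (YFh K c k * YFh K c j)
  | YYinv (j : Fin n) : HRel c (YFh K c j * YinvFh K c j) 1
  | YinvY (j : Fin n) : HRel c (YinvFh K c j * YFh K c j) 1
  | TYT {i : ℕ} (h : i + 1 < n) (hc : c ⟨i, by omega⟩ = c ⟨i + 1, h⟩) :
      HRel c (TFh K c i h hc * YFh K c ⟨i, by omega⟩ * TFh K c i h hc)
        (YFh K c ⟨i + 1, h⟩)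
  | TY {i : ℕ} (h : i + 1 < n) (hc : c ⟨i, by omega⟩ = c ⟨i + 1, h⟩)
      (j : Fin n) (hj1 : j.1 ≠ i) (hj2 : j.1 ≠ i + 1) :
      HRel c (TFh K c i h hc * YFh K c j) (YFh K c j * TFh K c i h hc)

/-- The algebra `Ĥ_{μ_1}^K ⊗ ⋯ ⊗ Ĥ_{μ_r}^K` (for `c` monotone with fiber sizes
`μ_k`); for `r = 1` it is the affine Hecke algebra `Ĥ_n^K` of type `A`. -/
abbrev HH (c : Fin n → Fin r) := RingQuot (HRel K q c)

def mkH (c : Fin n → Fin r) : FH K c →ₐ[K] HH K q c := RingQuot.mkAlgHom K (HRel K q c)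

/-- The generator `T_i` (for an adjacency internal to a block of `c`). -/
def Tg (c : Fin n → Fin r) (i : ℕ) (h : i + 1 < n)
    (hc : c ⟨i, by omega⟩ = c ⟨i + 1, h⟩) : HH K q c :=
  mkH K q c (TFh K c i h hc)
/-- The generator `Y_j`. -/
def Yg (c : Fin n → Fin r) (j : Fin n) : HH K q c := mkH K q c (YFh K c j)
/-- The generator `Y_j^{-1}`. -/
def Yinvg (c : Fin n → Fin r) (j : Fin n) : HH K q c := mkH K q c (YinvFh K c j)

end YH

namespace YH

variable (K : Type) [Field K] (r n : ℕ) (q : K)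

/-! ### Actions and induced modules -/

/-- The action of an algebra `R` on a module `M` as an algebra homomorphism
`R →ₐ[K] End_K(M)`. -/
def actHom (R : Type) [Ring R] [Algebra K R] (M : Type) [AddCommGroup M] [Module K M]
    [Module R M] [IsScalarTower K R M] : R →ₐ[K] Module.End K M where
  toFun a :=
    { toFun := fun m => a • m
      map_add' := fun x y => smul_add a x y
      map_smul' := fun k m => (smul_comm k a m).symm }
  map_one' := by ext m; exact one_smul R m
  map_mul' a b := by ext m; exact mul_smul a b m
  map_zero' := by ext m; exact zero_smul R m
  map_add' a b := by ext m; exact add_smul a b m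
  commutes' k := by
    ext m
    simp [Module.algebraMap_end_apply, algebraMap_smul]

/-- A `K`-space `P` with action `ρ` of an algebra `R` is "simple" if it is
nonzero and has no proper nonzero `ρ`-stable subspace. -/
def SimpleVia {R : Type} [Ring R] [Algebra K R] {P : Type} [AddCommGroup P] [Module K P]
    (ρ : R →ₐ[K] Module.End K P) : Prop :=
  Nontrivial P ∧
    ∀ Q : Submodule K P, (∀ h : R, ∀ v ∈ Q, ρ h v ∈ Q) → Q = ⊥ ∨ Q = ⊤

/-- The relation submodule defining the induced module
`Ŷ_{r,n}^K ⊗_{Ŷ_{r,μ}^K} (V(μ) ⊗ P)`, where `P` is a module over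
`Ĥ_{μ_1}^K ⊗ ⋯ ⊗ Ĥ_{μ_r}^K` (given by `ρ`), and `V(μ)` is the one-dimensional
`KT`-module attached to `c` (and a primitive `r`-th root of unity `ζ`):
we quotient `Ŷ_{r,n}^K ⊗_K P` by the `Ŷ`-span of the relations
`t_j ⊗ p = ζ^{c j} (1 ⊗ p)`, `g_i ⊗ p = 1 ⊗ T_i p` (`i` internal), and
`X_j ⊗ p = 1 ⊗ Y_j p`. -/
def IndRel (ζ : K) (c : Fin n → Fin r) (P : Type) [AddCommGroup P] [Module K P]
    (ρ : HH K q c →ₐ[K] Module.End K P) :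
    Submodule (Y K r n q) (Y K r n q ⊗[K] P) :=
  Submodule.span (Y K r n q)
    ({z : Y K r n q ⊗[K] P | ∃ (j : Fin n) (p : P),
        z = t K r n q j ⊗ₜ[K] p - (1 : Y K r n q) ⊗ₜ[K] (ζ ^ ((c j : ℕ)) • p)} ∪
      {z | ∃ (i : ℕ) (hi : i + 1 < n) (hc : c ⟨i, by omega⟩ = c ⟨i + 1, hi⟩) (p : P),
        z = g K r n q i hi ⊗ₜ[K] p - (1 : Y K r n q) ⊗ₜ[K] (ρ (Tg K q c i hi hc) p)} ∪
      {z | ∃ (j : Fin n) (p : P),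
        z = X K r n q j ⊗ₜ[K] p - (1 : Y K r n q) ⊗ₜ[K] (ρ (Yg K q c j) p)})

/-- The induced `Ŷ_{r,n}^K`-module `S_μ(L.) = Ŷ_{r,n}^K ⊗_{Ŷ_{r,μ}^K} (V(μ) ⊗ P)`. -/
def Ind (ζ : K) (c : Fin n → Fin r) (P : Type) [AddCommGroup P] [Module K P]
    (ρ : HH K q c →ₐ[K] Module.End K P) : Type :=
  @HasQuotient.Quotient _ _ (@Submodule.hasQuotient (Y K r n q) (Y K r n q ⊗[K] P) _ _ _) (IndRel K r n q ζ c P ρ)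

instance (ζ : K) (c : Fin n → Fin r) (P : Type) [AddCommGroup P] [Module K P]
    (ρ : HH K q c →ₐ[K] Module.End K P) : AddCommGroup (Ind K r n q ζ c P ρ) :=
  inferInstanceAs (AddCommGroup (@HasQuotient.Quotient _ _ (@Submodule.hasQuotient (Y K r n q) (Y K r n q ⊗[K] P) _ _ _) (IndRel K r n q ζ c P ρ)))

instance (ζ : K) (c : Fin n → Fin r) (P : Type) [AddCommGroup P] [Module K P]
    (ρ : HH K q c →ₐ[K] Module.End K P) : Module (Y K r n q) (Ind K r n q ζ c P ρ) :=
  inferInstanceAs (Module (Y K r n q) (@HasQuotient.Quotient _ _ (@Submodule.hasQuotient (Y K r n q) (Y K r n q ⊗[K] P) _ _ _) (IndRel K r n q ζ c P ρ)))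

/-- The map skipping position `p`: `j ↦ j` if `j < p`, else `j ↦ j+1`
(the order embedding `Fin (n-1) → Fin n` avoiding `p`). -/
def skipIns (p : ℕ) (j : Fin (n - 1)) : Fin n :=
  if j.1 < p then ⟨j.1, by have := j.2; omega⟩ else ⟨j.1 + 1, by have := j.2; omega⟩

end YH

namespace S7

open YH

section Basic

variable {K : Type} [Field K] {r n : ℕ} {q : K}

lemma ysmul_comm (k : K) (a : Y K r n q) (M : Type) [AddCommGroup M] [Module K M]
    [Module (Y K r n q) M] [IsScalarTower K (Y K r n q) M] (x : M) :
    a • (k • x) = k • (a • x) := by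
  rw [← algebraMap_smul (Y K r n q) k x, ← mul_smul, ← Algebra.commutes k a,
    mul_smul, algebraMap_smul]

lemma yrel {a b : FY K n} (h : YRel K r n q a b) : mkY K r n q a = mkY K r n q b :=
  RingQuot.mkAlgHom_rel K h

lemma t_comm (j j' : Fin n) : t K r n q j * t K r n q j' = t K r n q j' * t K r n q j := by
  have := yrel (YRel.tt (K := K) (r := r) (q := q) j j')
  simpa [t, map_mul] using this

lemma t_pow_r (j : Fin n) : (t K r n q j) ^ r = 1 := by
  have := yrel (YRel.tr (K := K) (q := q) (r := r) j)
  simpa [t, map_pow, map_one] using this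

lemma g_t (i : ℕ) (hi : i + 1 < n) (j : Fin n) :
    g K r n q i hi * t K r n q j = t K r n q (swapi n i hi j) * g K r n q i hi := by
  have := yrel (YRel.gt (K := K) (r := r) (q := q) hi j)
  simpa [t, g, map_mul] using this

lemma t_g (i : ℕ) (hi : i + 1 < n) (j : Fin n) :
    t K r n q j * g K r n q i hi = g K r n q i hi * t K r n q (swapi n i hi j) := by
  have := g_t (K := K) (r := r) (q := q) i hi (swapi n i hi j)
  rw [show swapi n i hi (swapi n i hi j) = j from Equiv.swap_apply_self _ _ _] at this
  rw [← this]

lemma g_sq (i : ℕ) (hi : i + 1 < n) :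
    g K r n q i hi * g K r n q i hi =
      1 + (q - q⁻¹) • (e K r n q i hi * g K r n q i hi) := by
  have := yrel (YRel.gsq (K := K) (r := r) (q := q) hi)
  simpa [g, e, map_mul, map_add, map_one, map_smul] using this

lemma t_X1 (j : Fin n) : t K r n q j * X1 K r n q = X1 K r n q * t K r n q j := by
  have := yrel (YRel.tX (K := K) (r := r) (q := q) j)
  simpa [t, X1, map_mul] using this

lemma X1_X1inv : X1 K r n q * X1inv K r n q = 1 := by
  have := yrel (YRel.XXinv (K := K) (r := r) (q := q) (n := n))
  simpa [X1, X1inv, map_mul, map_one] using this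

lemma X1inv_X1 : X1inv K r n q * X1 K r n q = 1 := by
  have := yrel (YRel.XinvX (K := K) (r := r) (q := q) (n := n))
  simpa [X1, X1inv, map_mul, map_one] using this

lemma t_X1inv (j : Fin n) :
    t K r n q j * X1inv K r n q = X1inv K r n q * t K r n q j := by
  have h1 : X1inv K r n q * (t K r n q j * X1 K r n q) * X1inv K r n q
      = X1inv K r n q * (X1 K r n q * t K r n q j) * X1inv K r n q := by
    rw [t_X1]
  calc t K r n q j * X1inv K r n q
      = (X1inv K r n q * X1 K r n q) * (t K r n q j * X1inv K r n q) := by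
        rw [X1inv_X1, one_mul]
    _ = X1inv K r n q * ((X1 K r n q * t K r n q j) * X1inv K r n q) := by
        simp only [mul_assoc]
    _ = X1inv K r n q * ((t K r n q j * X1 K r n q) * X1inv K r n q) := by rw [t_X1]
    _ = X1inv K r n q * t K r n q j * (X1 K r n q * X1inv K r n q) := by
        simp only [mul_assoc]
    _ = X1inv K r n q * t K r n q j := by rw [X1_X1inv, mul_one]

lemma e_expand (i : ℕ) (hi : i + 1 < n) :
    e K r n q i hi = (r : K)⁻¹ • ∑ s ∈ Finset.range r,
      (t K r n q ⟨i, by omega⟩) ^ s * (t K r n q ⟨i + 1, hi⟩) ^ ((r - s) % r) := by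
  simp only [e, eF, map_smul, map_sum, map_mul, map_pow]
  rfl

end Basic

end S7


namespace S7

open YH

section Act

variable {K : Type} [Field K] {r n : ℕ} {q ζ : K}
variable {M : Type} [AddCommGroup M] [Module K M] [Module (Y K r n q) M]
  [IsScalarTower K (Y K r n q) M]

lemma mem_Imu {f : Fin n → Fin r} {x : M} :
    x ∈ Imu K r n q M ζ f ↔ ∀ j : Fin n, t K r n q j • x = ζ ^ ((f j : ℕ)) • x :=
  Iff.rfl

lemma t_pow_smul {f : Fin n → Fin r} {x : M} (hx : x ∈ Imu K r n q M ζ f)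
    (j : Fin n) (s : ℕ) : (t K r n q j) ^ s • x = ((ζ : K) ^ ((f j : ℕ))) ^ s • x := by
  induction s with
  | zero => simp
  | succ s ih =>
    rw [pow_succ, mul_smul, mem_Imu.1 hx j, ysmul_comm, ih, smul_smul, pow_succ]
    ring_nf

lemma g_smul_mem_Imu {f : Fin n → Fin r} {x : M} (hx : x ∈ Imu K r n q M ζ f)
    (i : ℕ) (hi : i + 1 < n) :
    g K r n q i hi • x ∈ Imu K r n q M ζ (f ∘ swapi n i hi) := by
  intro j
  rw [← mul_smul, t_g, mul_smul, mem_Imu.1 hx (swapi n i hi j), ysmul_comm]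
  rfl

lemma X1_smul_mem_Imu {f : Fin n → Fin r} {x : M} (hx : x ∈ Imu K r n q M ζ f) :
    X1 K r n q • x ∈ Imu K r n q M ζ f := by
  intro j
  rw [← mul_smul, t_X1, mul_smul, mem_Imu.1 hx j, ysmul_comm]

lemma X1inv_smul_mem_Imu {f : Fin n → Fin r} {x : M} (hx : x ∈ Imu K r n q M ζ f) :
    X1inv K r n q • x ∈ Imu K r n q M ζ f := by
  intro j
  rw [← mul_smul, t_X1inv, mul_smul, mem_Imu.1 hx j, ysmul_comm]

variable (hr : 0 < r) (hrK : (r : K) ≠ 0) (hζ : IsPrimitiveRoot ζ r)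

include hr hζ in
lemma zeta_ne_zero : ζ ≠ 0 := by
  intro h
  have : (ζ : K) ^ r = 1 := hζ.pow_eq_one
  rw [h, zero_pow hr.ne'] at this
  exact zero_ne_one this

include hr hrK hζ in
lemma e_smul {f : Fin n → Fin r} {x : M} (hx : x ∈ Imu K r n q M ζ f)
    (i : ℕ) (hi : i + 1 < n) :
    e K r n q i hi • x =
      (if f ⟨i, by omega⟩ = f ⟨i + 1, hi⟩ then (1 : K) else 0) • x := by
  have hz : ζ ≠ 0 := zeta_ne_zero hr hζ
  set i0 : Fin n := ⟨i, by omega⟩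
  set i1 : Fin n := ⟨i + 1, hi⟩
  set lam : K := ζ ^ ((f i0 : ℕ)) with hlamdef
  set mu : K := ζ ^ ((f i1 : ℕ)) with hmudef
  have hlam : lam ≠ 0 := pow_ne_zero _ hz
  have hmu : mu ≠ 0 := pow_ne_zero _ hz
  have hmur : mu ^ r = 1 := by
    rw [← pow_mul, mul_comm, pow_mul, hζ.pow_eq_one, one_pow]
  have hlamr : lam ^ r = 1 := by
    rw [← pow_mul, mul_comm, pow_mul, hζ.pow_eq_one, one_pow]
  have key : e K r n q i hi • x =
      ((r : K)⁻¹ * ∑ s ∈ Finset.range r, (lam * mu⁻¹) ^ s) • x := by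
    rw [e_expand, smul_assoc, Finset.sum_smul]
    have hterm : ∀ s ∈ Finset.range r,
        ((t K r n q i0) ^ s * (t K r n q i1) ^ ((r - s) % r)) • x
          = (lam * mu⁻¹) ^ s • x := by
      intro s hs
      rw [Finset.mem_range] at hs
      rw [mul_smul, t_pow_smul hx, ysmul_comm, t_pow_smul hx, smul_smul]
      congr 1
      rcases Nat.eq_zero_or_pos s with rfl | hspos
      · simp [Nat.mod_self]
      · have h1 : (r - s) % r = r - s := Nat.mod_eq_of_lt (by omega)
        rw [h1]
        have h2 : mu ^ (r - s) * mu ^ s = 1 := by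
          rw [← pow_add, Nat.sub_add_cancel hs.le, hmur]
        have h3 : mu ^ (r - s) = (mu ^ s)⁻¹ := by
          field_simp
          linear_combination h2
        rw [h3, mul_pow, inv_pow]
        ring
    rw [Finset.sum_congr rfl hterm, ← Finset.sum_smul, smul_smul]
  rw [key]
  by_cases hfe : f i0 = f i1
  · have : lam = mu := by rw [hlamdef, hmudef, hfe]
    rw [this, mul_inv_cancel₀ hmu]
    simp [hfe, Finset.sum_const, inv_mul_cancel₀ hrK]
  · have hne : lam * mu⁻¹ ≠ 1 := by
      intro h
      apply hfe
      have : lam = mu := by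
        field_simp at h
        exact h
      exact Fin.val_injective (hζ.pow_inj (f i0).2 (f i1).2 this)
    have hpow : (lam * mu⁻¹) ^ r = 1 := by
      rw [mul_pow, inv_pow, hlamr, hmur]
      simp
    have hsum : ∑ s ∈ Finset.range r, (lam * mu⁻¹) ^ s = 0 := by
      have := geom_sum_mul (lam * mu⁻¹) r
      rw [hpow, sub_self] at this
      rcases mul_eq_zero.1 this with h | h
      · exact h
      · exact absurd (by linear_combination h) hne
    simp [hsum, hfe]

lemma g_g_smul (i : ℕ) (hi : i + 1 < n) (x : M) :
    g K r n q i hi • (g K r n q i hi • x) =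
      x + (q - q⁻¹) • (e K r n q i hi • (g K r n q i hi • x)) := by
  rw [← mul_smul, g_sq, add_smul, one_smul, smul_assoc, mul_smul]

end Act

end S7


namespace S7

open YH

section Words

variable {K : Type} [Field K] {r n : ℕ} {q : K}

lemma permOfWord_nil : permOfWord n ([] : Word n) = 1 := rfl

lemma permOfWord_cons (a : {i : ℕ // i + 1 < n}) (l : Word n) :
    permOfWord n (a :: l) = swapi n a.1 a.2 * permOfWord n l := by
  simp [permOfWord]

lemma gword_nil : gword K r n q ([] : Word n) = 1 := rfl

lemma gword_cons (a : {i : ℕ // i + 1 < n}) (l : Word n) :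
    gword K r n q (a :: l) = g K r n q a.1 a.2 * gword K r n q l := by
  simp [gword]

lemma fin_mk_ne (i : ℕ) (hi : i + 1 < n) :
    (⟨i, by omega⟩ : Fin n) ≠ ⟨i + 1, hi⟩ := by
  simp [Fin.ext_iff]

lemma sign_swapi (i : ℕ) (hi : i + 1 < n) :
    Equiv.Perm.sign (swapi n i hi) = -1 :=
  Equiv.Perm.sign_swap (fin_mk_ne i hi)

lemma sign_permOfWord (l : Word n) :
    Equiv.Perm.sign (permOfWord n l) = (-1) ^ l.length := by
  induction l with
  | nil => simp [permOfWord_nil]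
  | cons a l ih =>
    rw [permOfWord_cons, map_mul, ih, sign_swapi, List.length_cons, pow_succ, mul_comm]

lemma length_mod_two_eq {l l' : Word n} (h : permOfWord n l = permOfWord n l') :
    l.length % 2 = l'.length % 2 := by
  have hs : ((-1 : ℤˣ)) ^ l.length = (-1) ^ l'.length := by
    rw [← sign_permOfWord, ← sign_permOfWord, h]
  rcases Nat.even_or_odd l.length with he | ho <;>
    rcases Nat.even_or_odd l'.length with he' | ho'
  · rw [Nat.even_iff] at he he'; omega
  · rw [Even.neg_one_pow he, Odd.neg_one_pow ho'] at hs
    exact absurd hs (by decide)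
  · rw [Odd.neg_one_pow ho, Even.neg_one_pow he'] at hs
    exact absurd hs (by decide)
  · rw [Nat.odd_iff] at ho ho'; omega

lemma exists_word_of_list (L : List (Equiv.Perm (Fin n)))
    (hL : ∀ y ∈ L, ∃ (i : ℕ) (h : i + 1 < n), y = swapi n i h) :
    ∃ l : Word n, permOfWord n l = L.prod := by
  induction L with
  | nil => exact ⟨[], rfl⟩
  | cons a L ih =>
    obtain ⟨l, hl⟩ := ih (fun y hy => hL y (List.mem_cons_of_mem a hy))
    obtain ⟨i, h, rfl⟩ := hL a List.mem_cons_self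
    exact ⟨⟨i, h⟩ :: l, by rw [permOfWord_cons, hl, List.prod_cons]⟩

lemma exists_word (w : Equiv.Perm (Fin n)) : ∃ l : Word n, permOfWord n l = w := by
  rcases Nat.eq_zero_or_pos n with rfl | hn
  · exact ⟨[], Subsingleton.elim _ _⟩
  obtain ⟨m, rfl⟩ : ∃ m, n = m + 1 := ⟨n - 1, by omega⟩
  have hw : w ∈ Submonoid.closure
      (Set.range fun i : Fin m ↦ Equiv.swap i.castSucc i.succ) := by
    rw [Equiv.Perm.mclosure_swap_castSucc_succ]; trivial
  obtain ⟨L, hL, hprod⟩ := Submonoid.exists_list_of_mem_closure hw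
  obtain ⟨l, hl⟩ := exists_word_of_list L (by
    intro y hy
    obtain ⟨i, rfl⟩ := hL y hy
    refine ⟨i.1, by omega, ?_⟩
    simp only [swapi]
    congr 1 <;> exact Fin.ext rfl)
  exact ⟨l, by rw [hl, hprod]⟩

lemma exists_reduced (w : Equiv.Perm (Fin n)) : ∃ l : Word n, IsReducedWord n l w := by
  classical
  set S : Set ℕ := {k | ∃ l : Word n, l.length = k ∧ permOfWord n l = w} with hS
  have hne : S.Nonempty := by
    obtain ⟨l, hl⟩ := exists_word w
    exact ⟨l.length, l, rfl, hl⟩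
  obtain ⟨l, hlen, hperm⟩ := Nat.sInf_mem hne
  refine ⟨l, hperm, fun l' hl' => ?_⟩
  rw [hlen]
  exact Nat.sInf_le ⟨l', rfl, hl'⟩

end Words

end S7


namespace S7

open YH

section Main

variable {K : Type} [Field K] {r n : ℕ} {q ζ : K}
variable {M : Type} [AddCommGroup M] [Module K M] [Module (Y K r n q) M]
  [IsScalarTower K (Y K r n q) M]

/-- `f` is a rearrangement of `c`. -/
def Rearr (c f : Fin n → Fin r) : Prop := ∃ σ : Equiv.Perm (Fin n), f = c ∘ σ

lemma Rearr.refl (c : Fin n → Fin r) : Rearr c c :=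
  ⟨1, by simp⟩

lemma Rearr.swap {c f : Fin n → Fin r} (h : Rearr c f) (i : ℕ) (hi : i + 1 < n) :
    Rearr c (f ∘ swapi n i hi) := by
  obtain ⟨σ, rfl⟩ := h
  exact ⟨σ * swapi n i hi, by rw [Equiv.Perm.coe_mul]; rfl⟩

/-- The sum of the isotypic components over all rearrangements of `c`. -/
def NN (ζ : K) (c : Fin n → Fin r) (M : Type) [AddCommGroup M] [Module K M]
    [Module (Y K r n q) M] [IsScalarTower K (Y K r n q) M] : Submodule K M :=
  ⨆ (f : Fin n → Fin r) (_ : Rearr c f), Imu K r n q M ζ f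

lemma imu_le_NN {c f : Fin n → Fin r} (h : Rearr c f) :
    Imu K r n q M ζ f ≤ NN (q := q) ζ c M :=
  le_iSup_of_le f (le_iSup_of_le h le_rfl)

lemma NN_act {c : Fin n → Fin r} (a : Y K r n q)
    (hgen : ∀ f : Fin n → Fin r, Rearr c f → ∀ x ∈ Imu K r n q M ζ f,
      a • x ∈ NN (q := q) ζ c M) :
    ∀ x ∈ NN (q := q) ζ c M, a • x ∈ NN (q := q) ζ c M := by
  intro x hx
  have hle : NN (q := q) ζ c M ≤
      Submodule.comap ((actHom K (Y K r n q) M) a) (NN (q := q) ζ c M) := by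
    refine iSup_le fun f => iSup_le fun hf => ?_
    intro y hy
    exact hgen f hf y hy
  exact hle hx

lemma NN_stable {c : Fin n → Fin r} (a : Y K r n q) {x : M}
    (hx : x ∈ NN (q := q) ζ c M) : a • x ∈ NN (q := q) ζ c M := by
  obtain ⟨b, rfl⟩ := RingQuot.mkAlgHom_surjective K (YRel K r n q) a
  revert x
  show ∀ x, x ∈ NN (q := q) ζ c M → mkY K r n q b • x ∈ NN (q := q) ζ c M
  induction b using FreeAlgebra.induction with
  | grade0 k =>
    intro x hx
    rw [AlgHom.commutes, algebraMap_smul]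
    exact Submodule.smul_mem _ k hx
  | grade1 gen =>
    cases gen with
    | t j =>
      refine NN_act _ fun f hf x hx => ?_
      have : mkY K r n q (FreeAlgebra.ι K (YGen.t j)) = t K r n q j := rfl
      rw [this, mem_Imu.1 hx j]
      exact Submodule.smul_mem _ _ (imu_le_NN hf hx)
    | g i hi =>
      refine NN_act _ fun f hf x hx => ?_
      have : mkY K r n q (FreeAlgebra.ι K (YGen.g i hi)) = g K r n q i hi := rfl
      rw [this]
      exact imu_le_NN (hf.swap i hi) (g_smul_mem_Imu hx i hi)
    | X1 =>
      refine NN_act _ fun f hf x hx => ?_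
      have : mkY K r n q (FreeAlgebra.ι K YGen.X1) = X1 K r n q := rfl
      rw [this]
      exact imu_le_NN hf (X1_smul_mem_Imu hx)
    | X1inv =>
      refine NN_act _ fun f hf x hx => ?_
      have : mkY K r n q (FreeAlgebra.ι K YGen.X1inv) = X1inv K r n q := rfl
      rw [this]
      exact imu_le_NN hf (X1inv_smul_mem_Imu hx)
  | mul a b ha hb =>
    intro x hx
    rw [map_mul, mul_smul]
    exact ha _ (hb x hx)
  | add a b ha hb =>
    intro x hx
    rw [map_add, add_smul]
    exact add_mem (ha x hx) (hb x hx)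

variable (gw : Equiv.Perm (Fin n) → Y K r n q)

lemma Mmu_le_NN {c : Fin n → Fin r} :
    Mmu K r n q M ζ c gw ≤ NN (q := q) ζ c M := by
  refine Submodule.span_le.2 ?_
  rintro x ⟨w, m, hm, rfl⟩
  exact NN_stable (gw w) (imu_le_NN (Rearr.refl c) hm)

variable (hgw : GwSpec K r n q gw)

include hgw in
lemma gw_one : gw 1 = 1 := by
  rw [hgw 1 [] ⟨permOfWord_nil, fun l' _ => Nat.zero_le _⟩, gword_nil]

include hgw in
lemma imu_c_le_Mmu {c : Fin n → Fin r} {m : M} (hm : m ∈ Imu K r n q M ζ c) :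
    m ∈ Mmu K r n q M ζ c gw :=
  Submodule.subset_span ⟨1, m, hm, by rw [gw_one gw hgw, one_smul]⟩

lemma gword_smul_mem_exists (l : Word n) {f : Fin n → Fin r} {x : M}
    (hx : x ∈ Imu K r n q M ζ f) :
    ∃ h : Fin n → Fin r, gword K r n q l • x ∈ Imu K r n q M ζ h := by
  induction l generalizing f x with
  | nil => exact ⟨f, by rw [gword_nil, one_smul]; exact hx⟩
  | cons a l ih =>
    obtain ⟨h, hh⟩ := ih hx
    exact ⟨h ∘ swapi n a.1 a.2, by
      rw [gword_cons, mul_smul]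
      exact g_smul_mem_Imu hh a.1 a.2⟩

variable (hr : 0 < r) (hrK : (r : K) ≠ 0) (hζ : IsPrimitiveRoot ζ r)

include hr hrK hζ hgw in
lemma KL {c : Fin n → Fin r} {m : M} (hm : m ∈ Imu K r n q M ζ c)
    (i : ℕ) (hi : i + 1 < n) (w : Equiv.Perm (Fin n)) :
    g K r n q i hi • (gw w • m) ∈ Mmu K r n q M ζ c gw := by
  obtain ⟨lw, hlw⟩ := exists_reduced w
  set u := swapi n i hi * w with hu
  obtain ⟨lu, hlu⟩ := exists_reduced u
  have hcons_u : permOfWord n (⟨i, hi⟩ :: lw) = u := by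
    rw [permOfWord_cons, hlw.1]
  have hcons_w : permOfWord n (⟨i, hi⟩ :: lu) = w := by
    rw [permOfWord_cons, hlu.1, hu, ← mul_assoc]
    simp [swapi]
  have h1 : lu.length ≤ lw.length + 1 := by
    have := hlu.2 _ hcons_u
    simpa using this
  have h2 : lw.length ≤ lu.length + 1 := by
    have := hlw.2 _ hcons_w
    simpa using this
  have hne : lw.length ≠ lu.length := by
    intro h
    have hpar := length_mod_two_eq (l := (⟨i, hi⟩ :: lw : Word n)) (l' := lu)
      (by rw [hcons_u, hlu.1])
    simp only [List.length_cons] at hpar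
    omega
  rcases lt_or_gt_of_ne hne with hlt | hgt
  · have hred : IsReducedWord n (⟨i, hi⟩ :: lw) u := by
      refine ⟨hcons_u, fun l' hl' => ?_⟩
      have := hlu.2 l' hl'
      simp only [List.length_cons]
      omega
    have hgu : gw u = g K r n q i hi * gword K r n q lw := by
      rw [hgw u _ hred, gword_cons]
    rw [hgw w lw hlw, ← mul_smul, ← hgu]
    exact Submodule.subset_span ⟨u, m, hm, rfl⟩
  · have hred : IsReducedWord n (⟨i, hi⟩ :: lu) w := by
      refine ⟨hcons_w, fun l' hl' => ?_⟩
      have := hlw.2 l' hl'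
      simp only [List.length_cons]
      omega
    have hgww : gw w = g K r n q i hi * gw u := by
      rw [hgw w _ hred, gword_cons, ← hgw u lu hlu]
    obtain ⟨h, hh⟩ : ∃ h, gw w • m ∈ Imu K r n q M ζ h := by
      rw [hgw w lw hlw]
      exact gword_smul_mem_exists lw hm
    have inner : g K r n q i hi • (gw u • m) = gw w • m := by
      rw [hgww, mul_smul]
    have key : g K r n q i hi • (gw w • m) =
        gw u • m + (q - q⁻¹) • (e K r n q i hi • (gw w • m)) := by
      conv_lhs => rw [hgww, mul_smul]
      rw [g_g_smul, inner]
    rw [key, e_smul hr hrK hζ hh i hi]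
    refine add_mem (Submodule.subset_span ⟨u, m, hm, rfl⟩) ?_
    exact Submodule.smul_mem _ _ (Submodule.smul_mem _ _
      (Submodule.subset_span ⟨w, m, hm, rfl⟩))

include hr hrK hζ hgw in
lemma g_smul_Mmu {c : Fin n → Fin r} (i : ℕ) (hi : i + 1 < n) {x : M}
    (hx : x ∈ Mmu K r n q M ζ c gw) :
    g K r n q i hi • x ∈ Mmu K r n q M ζ c gw := by
  induction hx using Submodule.span_induction with
  | mem x hxmem =>
    obtain ⟨w, m, hm, rfl⟩ := hxmem
    exact KL gw hgw hr hrK hζ hm i hi w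
  | zero => rw [smul_zero]; exact zero_mem _
  | add x y _ _ hx hy => rw [smul_add]; exact add_mem hx hy
  | smul k x _ hx =>
    rw [ysmul_comm]
    exact Submodule.smul_mem _ k hx

lemma monotone_of_adj {f : Fin n → Fin r}
    (h : ∀ i (hi : i + 1 < n), f ⟨i, by omega⟩ ≤ f ⟨i + 1, hi⟩) : Monotone f := by
  have step : ∀ (k : ℕ) (a : Fin n) (h2 : a.1 + k < n), f a ≤ f ⟨a.1 + k, h2⟩ := by
    intro k
    induction k with
    | zero => intro a h2; exact le_of_eq (congrArg f (Fin.ext (by simp)))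
    | succ k ih =>
      intro a h2
      refine le_trans (ih a (by omega)) ?_
      exact h (a.1 + k) (by omega)
  intro a b hab
  have hab' : a.1 ≤ b.1 := hab
  have := step (b.1 - a.1) a (by omega)
  have hb : b = ⟨a.1 + (b.1 - a.1), by omega⟩ :=
    Fin.ext (show b.1 = a.1 + (b.1 - a.1) by omega)
  rw [hb]
  exact this

/-- A decreasing measure for bubble sort. -/
def meas (f : Fin n → Fin r) : ℕ := ∑ j : Fin n, (n - 1 - j.1) * (f j).1

lemma meas_swap_lt {f : Fin n → Fin r} (i : ℕ) (hi : i + 1 < n)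
    (hdes : f ⟨i + 1, hi⟩ < f ⟨i, by omega⟩) :
    meas (f ∘ swapi n i hi) < meas f := by
  classical
  set i0 : Fin n := ⟨i, by omega⟩ with hi0
  set i1 : Fin n := ⟨i + 1, hi⟩ with hi1
  have hne : i1 ≠ i0 := by simp [hi0, hi1, Fin.ext_iff]
  have split : ∀ F : Fin n → ℕ, ∑ j : Fin n, F j =
      F i0 + (F i1 + ∑ j ∈ (Finset.univ.erase i0).erase i1, F j) := by
    intro F
    rw [Finset.add_sum_erase _ F (Finset.mem_erase.2 ⟨hne, Finset.mem_univ i1⟩),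
      Finset.add_sum_erase _ F (Finset.mem_univ i0)]
  have heq : ∀ j ∈ (Finset.univ.erase i0).erase i1,
      (n - 1 - j.1) * ((f ∘ swapi n i hi) j).1 = (n - 1 - j.1) * (f j).1 := by
    intro j hj
    have hj' := Finset.mem_erase.1 hj
    have hj1 := hj'.1
    have hj0 := (Finset.mem_erase.1 hj'.2).1
    have : swapi n i hi j = j := Equiv.swap_apply_of_ne_of_ne hj0 hj1
    simp [this]
  rw [meas, meas, split, split]
  rw [Finset.sum_congr rfl heq]
  have e0 : (f ∘ swapi n i hi) i0 = f i1 := by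
    simp only [Function.comp_apply, swapi]
    rw [show (⟨i, by omega⟩ : Fin n) = i0 from rfl]
    rw [Equiv.swap_apply_left]
  have e1 : (f ∘ swapi n i hi) i1 = f i0 := by
    simp only [Function.comp_apply, swapi]
    rw [show (⟨i + 1, hi⟩ : Fin n) = i1 from rfl]
    rw [Equiv.swap_apply_right]
  rw [e0, e1]
  have hw : n - 1 - i0.1 = (n - 1 - i1.1) + 1 := by
    simp only [hi0, hi1]
    omega
  have gen : ∀ (w1 T a b : ℕ), b < a →
      (w1 + 1) * b + (w1 * a + T) < (w1 + 1) * a + (w1 * b + T) := by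
    intro w1 T a b h
    rw [Nat.succ_mul, Nat.succ_mul]
    omega
  rw [hw]
  exact gen (n - 1 - i1.1) _ (f i0).1 (f i1).1 hdes

lemma monotone_rearr_eq {c f : Fin n → Fin r} (hc : Monotone c) (hf : Monotone f)
    (h : Rearr c f) : f = c := by
  obtain ⟨σ, rfl⟩ := h
  have h1 : Monotone (c ∘ ⇑σ) := hf
  have h2 : Monotone (c ∘ ⇑(1 : Equiv.Perm (Fin n))) := by
    simpa using hc
  have := Tuple.unique_monotone h1 h2
  simpa using this

include hr hrK hζ hgw in
lemma NN_le_Mmu {c : Fin n → Fin r} (hc : Monotone c) :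
    NN (q := q) ζ c M ≤ Mmu K r n q M ζ c gw := by
  have main : ∀ (N : ℕ) (f : Fin n → Fin r), Rearr c f → meas f ≤ N →
      Imu K r n q M ζ f ≤ Mmu K r n q M ζ c gw := by
    intro N
    induction N with
    | zero =>
      intro f hf hmeas
      by_cases hmono : Monotone f
      · rw [monotone_rearr_eq hc hmono hf]
        intro x hx
        exact imu_c_le_Mmu gw hgw hx
      · exfalso
        have : ¬ ∀ i (hi : i + 1 < n), f ⟨i, by omega⟩ ≤ f ⟨i + 1, hi⟩ :=
          fun h => hmono (monotone_of_adj h)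
        push_neg at this
        obtain ⟨i, hi, hdes⟩ := this
        have := meas_swap_lt i hi hdes
        omega
    | succ N ih =>
      intro f hf hmeas
      by_cases hmono : Monotone f
      · rw [monotone_rearr_eq hc hmono hf]
        intro x hx
        exact imu_c_le_Mmu gw hgw hx
      · have hadj : ¬ ∀ i (hi : i + 1 < n), f ⟨i, by omega⟩ ≤ f ⟨i + 1, hi⟩ :=
          fun h => hmono (monotone_of_adj h)
        push_neg at hadj
        obtain ⟨i, hi, hdes⟩ := hadj
        intro x hx
        have hy : g K r n q i hi • x ∈ Imu K r n q M ζ (f ∘ swapi n i hi) :=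
          g_smul_mem_Imu hx i hi
        have hmeas' : meas (f ∘ swapi n i hi) ≤ N := by
          have := meas_swap_lt i hi hdes
          omega
        have hyM : g K r n q i hi • x ∈ Mmu K r n q M ζ c gw :=
          ih (f ∘ swapi n i hi) (hf.swap i hi) hmeas' hy
        have hez : e K r n q i hi • (g K r n q i hi • x) = 0 := by
          rw [e_smul hr hrK hζ hy i hi]
          have hcond : (f ∘ swapi n i hi) ⟨i, by omega⟩ ≠ (f ∘ swapi n i hi) ⟨i + 1, hi⟩ := by
            have e0 : (f ∘ swapi n i hi) ⟨i, by omega⟩ = f ⟨i + 1, hi⟩ := by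
              simp only [Function.comp_apply, swapi]
              rw [Equiv.swap_apply_left]
            have e1 : (f ∘ swapi n i hi) ⟨i + 1, hi⟩ = f ⟨i, by omega⟩ := by
              simp only [Function.comp_apply, swapi]
              rw [Equiv.swap_apply_right]
            rw [e0, e1]
            exact ne_of_lt hdes
          rw [if_neg hcond, zero_smul]
        have hxy : x = g K r n q i hi • (g K r n q i hi • x) := by
          rw [g_g_smul, hez, smul_zero, add_zero]
        rw [hxy]
        exact g_smul_Mmu gw hgw hr hrK hζ i hi hyM
  refine iSup_le fun f => iSup_le fun hf => ?_
  exact main (meas f) f hf le_rfl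

include hr hrK hζ hgw in
lemma Mmu_eq_NN {c : Fin n → Fin r} (hc : Monotone c) :
    Mmu K r n q M ζ c gw = NN (q := q) ζ c M :=
  le_antisymm (Mmu_le_NN gw) (NN_le_Mmu gw hgw hr hrK hζ hc)

end Main

end S7


namespace S7

open YH

section ListProd

/-- Distributing a product of sums over function tuples (valid without
commutativity since each factor keeps its position). -/
lemma list_prod_sum {R : Type} [Semiring R] {r : ℕ} :
    ∀ {n : ℕ} (a : Fin n → Fin r → R),
      ((List.finRange n).map fun j => ∑ k : Fin r, a j k).prod =
        ∑ f : Fin n → Fin r, ((List.finRange n).map fun j => a j (f j)).prod := by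
  intro n
  induction n with
  | zero =>
    intro a
    simp
  | succ n ih =>
    intro a
    have rhs : ∑ f : Fin (n + 1) → Fin r, ((List.finRange (n + 1)).map fun j => a j (f j)).prod
        = ∑ k : Fin r, ∑ g : Fin n → Fin r,
            a 0 k * ((List.finRange n).map fun j => a j.succ (g j)).prod := by
      rw [← Equiv.sum_comp (Fin.consEquiv (fun _ : Fin (n + 1) => Fin r))
        (fun f : Fin (n + 1) → Fin r => ((List.finRange (n + 1)).map fun j => a j (f j)).prod),
        Fintype.sum_prod_type]
      refine Finset.sum_congr rfl fun k _ => Finset.sum_congr rfl fun g _ => ?_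
      rw [List.finRange_succ, List.map_cons, List.prod_cons, List.map_map]
      simp only [Fin.consEquiv, Equiv.coe_fn_mk, Fin.cons_zero, Fin.cons_succ,
        Function.comp_def]
    rw [rhs, List.finRange_succ, List.map_cons, List.prod_cons, List.map_map,
      show ((fun j => ∑ k : Fin r, a j k) ∘ Fin.succ) = fun j : Fin n => ∑ k : Fin r,
        a j.succ k from rfl,
      ih (fun j k => a j.succ k)]
    try rw [Finset.sum_mul_sum]

end ListProd

section Proj

variable (K : Type) [Field K] (r n : ℕ) (q ζ : K)
variable (M : Type) [AddCommGroup M] [Module K M] [Module (Y K r n q) M]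
  [IsScalarTower K (Y K r n q) M]

/-- The action of `t_j` as a `K`-endomorphism. -/
def tau (j : Fin n) : Module.End K M := actHom K (Y K r n q) M (t K r n q j)

lemma tau_apply (j : Fin n) (x : M) : tau K r n q M j x = t K r n q j • x := rfl

lemma commute_tau (j j' : Fin n) : Commute (tau K r n q M j) (tau K r n q M j') := by
  unfold tau Commute SemiconjBy
  rw [← map_mul, ← map_mul, t_comm]

lemma tau_pow_apply {f : Fin n → Fin r} {x : M} (hx : x ∈ Imu K r n q M ζ f)
    (j : Fin n) (s : ℕ) :
    (tau K r n q M j ^ s) x = ((ζ : K) ^ ((f j : ℕ))) ^ s • x := by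
  have key : ∀ (s : ℕ) (y : M), (tau K r n q M j ^ s) y = (t K r n q j) ^ s • y := by
    intro s
    induction s with
    | zero => intro y; simp
    | succ s ih =>
      intro y
      rw [pow_succ, Module.End.mul_apply, tau_apply, ih, ← mul_smul, ← pow_succ]
  rw [key, t_pow_smul hx]

/-- The projection onto the `ζ^k`-eigenspace of `tau j`. -/
def pj (j : Fin n) (k : Fin r) : Module.End K M :=
  (r : K)⁻¹ • ∑ s ∈ Finset.range r, ((ζ ^ (k : ℕ))⁻¹) ^ s • tau K r n q M j ^ s

lemma commute_pj (j j' : Fin n) (k : Fin r) :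
    Commute (tau K r n q M j') (pj K r n q ζ M j k) := by
  unfold pj
  refine Commute.smul_right ?_ _
  refine Commute.sum_right _ _ _ fun s _ => ?_
  exact Commute.smul_right ((commute_tau K r n q M j' j).pow_right s) _

variable (hr : 0 < r) (hrK : (r : K) ≠ 0) (hζ : IsPrimitiveRoot ζ r)

lemma cyc_smul {A : Type} [Ring A] [Algebra K A] {m : ℕ} (T : A) (hT : T ^ (m + 1) = 1)
    (z : K) (hz : z ≠ 0) (hzr : z ^ (m + 1) = 1) :
    T * ∑ s ∈ Finset.range (m + 1), (z⁻¹) ^ s • T ^ s =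
      z • ∑ s ∈ Finset.range (m + 1), (z⁻¹) ^ s • T ^ s := by
  rw [Finset.mul_sum, Finset.smul_sum]
  have lhs_eq : ∀ s ∈ Finset.range (m + 1),
      T * ((z⁻¹) ^ s • T ^ s) = (z⁻¹) ^ s • T ^ (s + 1) := by
    intro s _
    rw [mul_smul_comm, ← pow_succ']
  have rhs_eq : ∀ s ∈ Finset.range (m + 1),
      z • ((z⁻¹) ^ s • T ^ s) = (z * (z⁻¹) ^ s) • T ^ s := by
    intro s _
    rw [smul_smul]
  rw [Finset.sum_congr rfl lhs_eq, Finset.sum_congr rfl rhs_eq]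
  rw [Finset.sum_range_succ]
  conv_rhs => rw [Finset.sum_range_succ']
  congr 1
  · refine Finset.sum_congr rfl fun s _ => ?_
    congr 1
    rw [pow_succ]
    field_simp
  · have h2 : (z⁻¹) ^ m = z := by
      have hinv : (z⁻¹) ^ (m + 1) = 1 := by
        rw [inv_pow, hzr, inv_one]
      rw [pow_succ] at hinv
      field_simp at hinv ⊢
      linear_combination hinv
    rw [hT, h2, pow_zero, pow_zero, mul_one]

include hr hζ in
lemma tau_mul_pj (j : Fin n) (k : Fin r) :
    tau K r n q M j * pj K r n q ζ M j k = (ζ ^ (k : ℕ)) • pj K r n q ζ M j k := by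
  have hz : ζ ≠ 0 := zeta_ne_zero hr hζ
  have hzk : (ζ : K) ^ (k : ℕ) ≠ 0 := pow_ne_zero _ hz
  have hzkr : ((ζ : K) ^ (k : ℕ)) ^ r = 1 := by
    rw [← pow_mul, mul_comm, pow_mul, hζ.pow_eq_one, one_pow]
  have h1 : tau K r n q M j ^ r = 1 := by
    unfold tau
    rw [← map_pow, t_pow_r, map_one]
  obtain ⟨m, hm⟩ : ∃ m, r = m + 1 := ⟨r - 1, by omega⟩
  unfold pj
  rw [mul_smul_comm, smul_comm ((ζ : K) ^ (k : ℕ)) ((r : K)⁻¹)]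
  congr 1
  have := cyc_smul (K := K) (A := Module.End K M) (m := m) (tau K r n q M j)
    (by rw [← hm]; exact h1) ((ζ : K) ^ (k : ℕ)) hzk (by rw [← hm]; exact hzkr)
  rw [← hm] at this
  exact this

include hr hrK hζ in
lemma pj_sum (j : Fin n) : ∑ k : Fin r, pj K r n q ζ M j k = 1 := by
  unfold pj
  rw [← Finset.smul_sum, Finset.sum_comm]
  have inner : ∀ s ∈ Finset.range r,
      (∑ k : Fin r, ((ζ ^ (k : ℕ))⁻¹) ^ s • tau K r n q M j ^ s)
        = (if s = 0 then (r : K) else 0) • tau K r n q M j ^ s := by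
    intro s hs
    rw [Finset.mem_range] at hs
    rw [← Finset.sum_smul]
    congr 1
    have hterm : ∀ k : Fin r, (((ζ : K) ^ (k : ℕ))⁻¹) ^ s = ((ζ⁻¹) ^ s) ^ (k : ℕ) := by
      intro k
      rw [← inv_pow, ← pow_mul, ← pow_mul, mul_comm]
    rw [Finset.sum_congr rfl fun k _ => hterm k]
    rw [Fin.sum_univ_eq_sum_range (fun k => ((ζ⁻¹ : K) ^ s) ^ k)]
    rcases Nat.eq_zero_or_pos s with rfl | hspos
    · simp
    · rw [if_neg (by omega)]
      have hz : ζ ≠ 0 := zeta_ne_zero hr hζ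
      have hne : ((ζ⁻¹ : K) ^ s) ≠ 1 := by
        intro h
        have : (ζ : K) ^ s = 1 := by
          rw [inv_pow] at h
          exact inv_eq_one.mp h
        have hdvd := (hζ.pow_eq_one_iff_dvd s).1 this
        have := Nat.le_of_dvd hspos hdvd
        omega
      have hpow : ((ζ⁻¹ : K) ^ s) ^ r = 1 := by
        rw [← pow_mul, mul_comm, pow_mul, inv_pow, hζ.pow_eq_one, inv_one, one_pow]
      have := geom_sum_mul ((ζ⁻¹ : K) ^ s) r
      rw [hpow, sub_self] at this
      rcases mul_eq_zero.1 this with h | h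
      · exact h
      · exact absurd (by linear_combination h) hne
  rw [Finset.sum_congr rfl inner]
  rw [Finset.sum_eq_single_of_mem 0 (Finset.mem_range.2 hr)
    (fun s _ hs0 => by rw [if_neg hs0, zero_smul])]
  rw [if_pos rfl, pow_zero, smul_smul, inv_mul_cancel₀ hrK, one_smul]

include hr hrK hζ in
lemma pj_eigen {f : Fin n → Fin r} {x : M} (hx : x ∈ Imu K r n q M ζ f)
    (j : Fin n) (k : Fin r) :
    pj K r n q ζ M j k x = (if k = f j then (1 : K) else 0) • x := by
  have hz : ζ ≠ 0 := zeta_ne_zero hr hζ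
  unfold pj
  rw [LinearMap.smul_apply, LinearMap.sum_apply]
  have hterm : ∀ s ∈ Finset.range r,
      (((ζ ^ (k : ℕ))⁻¹) ^ s • tau K r n q M j ^ s) x
        = ((ζ ^ (k : ℕ))⁻¹ * ζ ^ ((f j : ℕ))) ^ s • x := by
    intro s _
    rw [LinearMap.smul_apply, tau_pow_apply K r n q ζ M hx, smul_smul, mul_pow]
  rw [Finset.sum_congr rfl hterm, ← Finset.sum_smul, smul_smul]
  by_cases hk : k = f j
  · subst hk
    rw [if_pos rfl]
    rw [inv_mul_cancel₀ (pow_ne_zero _ hz)]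
    simp [inv_mul_cancel₀ hrK]
  · rw [if_neg hk]
    have hne : ((ζ : K) ^ (k : ℕ))⁻¹ * ζ ^ ((f j : ℕ)) ≠ 1 := by
      intro h
      apply hk
      have : (ζ : K) ^ ((f j : ℕ)) = ζ ^ (k : ℕ) := by
        field_simp at h
        rw [h]
      exact (Fin.val_injective (hζ.pow_inj (f j).2 k.2 this)).symm
    have hpow : (((ζ : K) ^ (k : ℕ))⁻¹ * ζ ^ ((f j : ℕ))) ^ r = 1 := by
      rw [mul_pow, inv_pow, ← pow_mul, mul_comm (k : ℕ) r, pow_mul, hζ.pow_eq_one,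
        one_pow, inv_one, one_mul, ← pow_mul, mul_comm ((f j : ℕ)) r, pow_mul,
        hζ.pow_eq_one, one_pow]
    have hsum : ∑ s ∈ Finset.range r, (((ζ : K) ^ (k : ℕ))⁻¹ * ζ ^ ((f j : ℕ))) ^ s = 0 := by
      have := geom_sum_mul (((ζ : K) ^ (k : ℕ))⁻¹ * ζ ^ ((f j : ℕ))) r
      rw [hpow, sub_self] at this
      rcases mul_eq_zero.1 this with h | h
      · exact h
      · exact absurd (by linear_combination h) hne
    rw [hsum, mul_zero, zero_smul]

/-- The projection onto the simultaneous eigenspace `Imu f`. -/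
def PP (f : Fin n → Fin r) : Module.End K M :=
  ((List.finRange n).map fun j => pj K r n q ζ M j (f j)).prod

include hr hrK hζ in
lemma PP_sum : ∑ f : Fin n → Fin r, PP K r n q ζ M f = 1 := by
  simp only [PP]
  rw [← list_prod_sum (fun j k => pj K r n q ζ M j k)]
  have : ∀ j ∈ List.finRange n, (∑ k : Fin r, pj K r n q ζ M j k) = (1 : Module.End K M) :=
    fun j _ => pj_sum K r n q ζ M hr hrK hζ j
  rw [show ((List.finRange n).map fun j => ∑ k : Fin r, pj K r n q ζ M j k)
      = (List.finRange n).map fun _ => (1 : Module.End K M) from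
    List.map_congr_left this]
  refine List.prod_eq_one fun a ha => ?_
  rw [List.mem_map] at ha
  obtain ⟨j, -, rfl⟩ := ha
  rfl

include hr hrK hζ in
lemma PP_eigen {h : Fin n → Fin r} {x : M} (hx : x ∈ Imu K r n q M ζ h)
    (f : Fin n → Fin r) :
    PP K r n q ζ M f x = if f = h then x else 0 := by
  classical
  have key : ∀ L : List (Fin n),
      ((L.map fun j => pj K r n q ζ M j (f j)).prod) x
        = (L.map fun j => if f j = h j then (1 : K) else 0).prod • x := by
    intro L
    induction L with
    | nil => simp
    | cons j L ih =>
      rw [List.map_cons, List.prod_cons, List.map_cons, List.prod_cons,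
        Module.End.mul_apply, ih, map_smul, pj_eigen K r n q ζ M hr hrK hζ hx j (f j),
        smul_smul, mul_comm]
  rw [PP, key]
  by_cases hfh : f = h
  · subst hfh
    rw [if_pos rfl, List.prod_eq_one, one_smul]
    intro a ha
    rw [List.mem_map] at ha
    obtain ⟨j, -, rfl⟩ := ha
    rw [if_pos rfl]
  · rw [if_neg hfh]
    obtain ⟨j0, hj0⟩ : ∃ j0, f j0 ≠ h j0 := Function.ne_iff.1 hfh
    have hmem : (0 : K) ∈ (List.finRange n).map fun j => if f j = h j then (1 : K) else 0 := by
      rw [List.mem_map]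
      exact ⟨j0, List.mem_finRange j0, by rw [if_neg hj0]⟩
    rw [List.prod_eq_zero hmem, zero_smul]

include hr hζ in
lemma PP_mem_Imu (f : Fin n → Fin r) (x : M) :
    PP K r n q ζ M f x ∈ Imu K r n q M ζ f := by
  have key : ∀ L : List (Fin n), ∀ j ∈ L,
      tau K r n q M j (((L.map fun j' => pj K r n q ζ M j' (f j')).prod) x)
        = (ζ ^ ((f j : ℕ))) • ((L.map fun j' => pj K r n q ζ M j' (f j')).prod) x := by
    intro L
    induction L with
    | nil => intro j hj; exact absurd hj List.not_mem_nil
    | cons j0 L ih =>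
      intro j hj
      rw [List.map_cons, List.prod_cons, Module.End.mul_apply]
      rcases List.mem_cons.1 hj with rfl | hjL
      · rw [← Module.End.mul_apply, tau_mul_pj K r n q ζ M hr hζ, LinearMap.smul_apply]
      · rw [← Module.End.mul_apply, (commute_pj K r n q ζ M j0 j (f j0)).eq,
          Module.End.mul_apply, ih j hjL, map_smul]
  intro j
  have := key (List.finRange n) j (List.mem_finRange j)
  rw [tau_apply] at this
  exact this

end Proj

end S7


namespace S7

open YH

section Final

open scoped Classical

variable {K : Type} [Field K] {r n : ℕ} {q ζ : K}
variable {M : Type} [AddCommGroup M] [Module K M] [Module (Y K r n q) M]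
  [IsScalarTower K (Y K r n q) M]

lemma rearr_sort (f : Fin n → Fin r) : Rearr (f ∘ ⇑(Tuple.sort f)) f := by
  refine ⟨(Tuple.sort f)⁻¹, funext fun j => ?_⟩
  simp only [Function.comp_apply]
  rw [show ⇑((Tuple.sort f)⁻¹) j = (Tuple.sort f)⁻¹ j from rfl,
    ← Equiv.Perm.mul_apply, mul_inv_cancel, Equiv.Perm.one_apply]

lemma rearr_unique {c c' f : Fin n → Fin r} (hc : Monotone c) (hc' : Monotone c')
    (h : Rearr c f) (h' : Rearr c' f) : c' = c := by
  obtain ⟨σ, hσ⟩ := h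
  obtain ⟨σ', hσ'⟩ := h'
  refine monotone_rearr_eq hc hc' ⟨σ * σ'⁻¹, funext fun j => ?_⟩
  have : c' (σ' (σ'⁻¹ j)) = c (σ (σ'⁻¹ j)) := by
    have h1 := congrFun hσ (σ'⁻¹ j)
    have h2 := congrFun hσ' (σ'⁻¹ j)
    rw [Function.comp_apply] at h1 h2
    rw [← h1, ← h2]
  rw [← Equiv.Perm.mul_apply, mul_inv_cancel, Equiv.Perm.one_apply] at this
  rw [this]
  rfl

variable (hr : 0 < r) (hrK : (r : K) ≠ 0) (hζ : IsPrimitiveRoot ζ r)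
variable (gw : Equiv.Perm (Fin n) → Y K r n q) (hgw : GwSpec K r n q gw)

include hr hrK hζ in
lemma QQ_fix (c : Fin n → Fin r) {f : Fin n → Fin r} {x : M}
    (hx : x ∈ Imu K r n q M ζ f) :
    (∑ f' ∈ Finset.univ.filter (fun f' => Rearr c f'), PP K r n q ζ M f') x
      = if Rearr c f then x else 0 := by
  classical
  rw [LinearMap.sum_apply]
  have hterm : ∀ f' ∈ Finset.univ.filter (fun f' : Fin n → Fin r => Rearr c f'),
      PP K r n q ζ M f' x = if f' = f then x else 0 := by
    intro f' _
    exact PP_eigen K r n q ζ M hr hrK hζ hx f'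
  rw [Finset.sum_congr rfl hterm, Finset.sum_ite_eq' _ f (fun _ => x)]
  simp

end Final

end S7

/-- Lemma 3.3 of the paper: for every finite-dimensional
`Ŷ_{r,n}^K`-module `M`, the submodules `M_μ = ∑_{w ∈ S_n} g_w(I_μM)`, as `μ`
ranges over the `r`-compositions of `n` (encoded by monotone block functions
`c : Fin n → Fin r`), are `Ŷ_{r,n}^K`-stable, independent, and sum to `M`:
`M = ⊕_{μ ∈ C_r(n)} M_μ` in `Ŷ_{r,n}^K`-mod. -/
theorem statement7 (K : Type) [Field K] [IsAlgClosed K] (r n : ℕ) (hr : 0 < r) (hn : 0 < n)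
    (hrK : (r : K) ≠ 0) (q : K) (hq : q ≠ 0)
    (ζ : K) (hζ : IsPrimitiveRoot ζ r)
    (gw : Equiv.Perm (Fin n) → YH.Y K r n q) (hgw : YH.GwSpec K r n q gw)
    (M : Type) [AddCommGroup M] [Module K M] [Module (YH.Y K r n q) M]
    [IsScalarTower K (YH.Y K r n q) M] [FiniteDimensional K M] :
    (∀ (c : {c : Fin n → Fin r // Monotone c}) (a : YH.Y K r n q) (x : M),
        x ∈ YH.Mmu K r n q M ζ c.1 gw → a • x ∈ YH.Mmu K r n q M ζ c.1 gw) ∧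
    iSupIndep (fun c : {c : Fin n → Fin r // Monotone c} =>
      YH.Mmu K r n q M ζ c.1 gw) ∧
    (⨆ c : {c : Fin n → Fin r // Monotone c}, YH.Mmu K r n q M ζ c.1 gw) = ⊤ := by
  classical
  refine ⟨?_, ?_, ?_⟩
  · intro c a x hx
    rw [S7.Mmu_eq_NN gw hgw hr hrK hζ c.2] at hx ⊢
    exact S7.NN_stable a hx
  · rw [iSupIndep_def]
    intro c
    rw [Submodule.disjoint_def]
    intro x hx1 hx2
    set Q : Module.End K M :=
      ∑ f' ∈ Finset.univ.filter (fun f' => S7.Rearr c.1 f'), S7.PP K r n q ζ M f' with hQ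
    have h1 : ∀ y ∈ YH.Mmu K r n q M ζ c.1 gw, Q y = y := by
      intro y hy
      rw [S7.Mmu_eq_NN gw hgw hr hrK hζ c.2] at hy
      have hle : S7.NN (q := q) ζ c.1 M ≤
          LinearMap.eqLocus Q (LinearMap.id : M →ₗ[K] M) := by
        refine iSup_le fun f => iSup_le fun hf => fun z hz => ?_
        refine LinearMap.mem_eqLocus.2 ?_
        have hfix := S7.QQ_fix hr hrK hζ c.1 hz
        rw [← hQ] at hfix
        rw [hfix, if_pos hf]
        rfl
      have := LinearMap.mem_eqLocus.1 (hle hy)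
      simpa using this
    have h0 : Q x = 0 := by
      have hle : (⨆ (c' : {c : Fin n → Fin r // Monotone c}) (_ : c' ≠ c),
          YH.Mmu K r n q M ζ c'.1 gw) ≤ LinearMap.ker Q := by
        refine iSup_le fun c' => iSup_le fun hne => ?_
        rw [S7.Mmu_eq_NN gw hgw hr hrK hζ c'.2]
        refine iSup_le fun f => iSup_le fun hf => fun z hz => ?_
        rw [LinearMap.mem_ker]
        have hfix := S7.QQ_fix hr hrK hζ c.1 hz
        rw [← hQ] at hfix
        rw [hfix, if_neg]
        intro hRcf
        exact hne (Subtype.ext (S7.rearr_unique c.2 c'.2 hRcf hf))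
      exact LinearMap.mem_ker.1 (hle hx2)
    rw [← h1 x hx1, h0]
  · rw [eq_top_iff]
    intro x _
    have hsum := S7.PP_sum K r n q ζ M hr hrK hζ
    have h1 : (∑ f : Fin n → Fin r, S7.PP K r n q ζ M f) x = (1 : Module.End K M) x := by
      rw [hsum]
    rw [LinearMap.sum_apply] at h1
    rw [Module.End.one_apply] at h1
    rw [← h1]
    refine Submodule.sum_mem _ fun f _ => ?_
    have hPf : S7.PP K r n q ζ M f x ∈ YH.Imu K r n q M ζ f :=
      S7.PP_mem_Imu K r n q ζ M hr hζ f x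
    set c0 : {c : Fin n → Fin r // Monotone c} :=
      ⟨f ∘ ⇑(Tuple.sort f), Tuple.monotone_sort f⟩ with hc0
    have hle : YH.Imu K r n q M ζ f ≤ YH.Mmu K r n q M ζ c0.1 gw := by
      rw [S7.Mmu_eq_NN gw hgw hr hrK hζ c0.2]
      exact S7.imu_le_NN (S7.rearr_sort f)
    exact le_iSup (fun c : {c : Fin n → Fin r // Monotone c} =>
      YH.Mmu K r n q M ζ c.1 gw) c0 (hle hPf)
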